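/- Let B be an exchange matrix of a cluster algebra of finite type Δ and fix 1 ≤ k ≤ n. Then every companion basis for μ_k(B) is of the form μ_k(𝓑) for some companion basis 𝓑 for B, where μ_k(𝓑) denotes the inward mutation of 𝓑 at k (i.e. β_i is replaced by s_{β_k}(β_i) when B_{ik} > 0 and is unchanged otherwise); this holds because inward and outward mutation of companion bases at k are mutually inverse operations. -/

import Mathlib

namespace ClusterReflection

variable {n : ℕ}

/-- A square integer matrix `B` is skew-symmetrisable if `D * B` is skew-symmetric for some
diagonal matrix `D` with positive diagonal entries. -/
def IsSkewSymmetrizable (B : Matrix (Fin n) (Fin n) ℤ) : Prop :=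
  ∃ d : Fin n → ℤ, (∀ i, 0 < d i) ∧ ∀ i j, d i * B i j = -(d j * B j i)

/-- Fomin-Zelevinsky matrix mutation in direction `k`. -/
def mutate (k : Fin n) (B : Matrix (Fin n) (Fin n) ℤ) : Matrix (Fin n) (Fin n) ℤ :=
  Matrix.of fun i j =>
    if i = k ∨ j = k then -B i j
    else B i j + (|B i k| * B k j + B i k * |B k j|) / 2

/-- One-step mutation relation. -/
def Mutation (X Y : Matrix (Fin n) (Fin n) ℤ) : Prop := ∃ k, Y = mutate k X

/-- `B` is of finite type (2-finite) if every matrix obtained from it by a finite sequence of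
mutations has `|B'_{ij} B'_{ji}| ≤ 3` for all `i, j`. -/
def IsFiniteType (B : Matrix (Fin n) (Fin n) ℤ) : Prop :=
  ∀ B', Relation.ReflTransGen Mutation B B' → ∀ i j, |B' i j * B' j i| ≤ 3

open RealInnerProductSpace

/-- The pairing `(β, α^∨) = 2⟪β, α⟫/⟪α, α⟫` of a vector with the coroot of `α`. -/
noncomputable def pairing (β α : EuclideanSpace ℝ (Fin n)) : ℝ :=
  2 * ⟪β, α⟫ / ⟪α, α⟫

/-- The reflection `s_α(v) = v - (v, α^∨) α` in the root `α`. -/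
noncomputable def reflRoot (α v : EuclideanSpace ℝ (Fin n)) : EuclideanSpace ℝ (Fin n) :=
  v - pairing v α • α

/-- `Φ` is a finite crystallographic root system of rank `n` in `ℝ^n`. -/
def IsRootSystem (Φ : Set (EuclideanSpace ℝ (Fin n))) : Prop :=
  Φ.Finite ∧ (∀ α ∈ Φ, α ≠ 0) ∧ Submodule.span ℝ Φ = ⊤ ∧
  (∀ α ∈ Φ, ∀ t : ℝ, t • α ∈ Φ → t = 1 ∨ t = -1) ∧
  (∀ α ∈ Φ, ∀ β ∈ Φ, reflRoot α β ∈ Φ) ∧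
  (∀ α ∈ Φ, ∀ β ∈ Φ, ∃ z : ℤ, pairing β α = z)

/-- `α` lists a base (system of simple roots) of the root system `Φ`. -/
def IsBase (Φ : Set (EuclideanSpace ℝ (Fin n)))
    (α : Fin n → EuclideanSpace ℝ (Fin n)) : Prop :=
  (∀ i, α i ∈ Φ) ∧ LinearIndependent ℝ α ∧
  ∀ γ ∈ Φ, ∃ c : Fin n → ℤ, γ = ∑ i, (c i : ℝ) • α i ∧ ((∀ i, 0 ≤ c i) ∨ (∀ i, c i ≤ 0))

/-- The Cartan counterpart `A(B)` of a skew-symmetrisable matrix `B`. -/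
def cartanCounterpart (B : Matrix (Fin n) (Fin n) ℤ) : Matrix (Fin n) (Fin n) ℤ :=
  Matrix.of fun i j => if i = j then 2 else -|B i j|

/-- `B` is an exchange matrix of the cluster algebra of finite type whose root system is `Φ`:
it is skew-symmetrisable of finite type and mutation-equivalent to a matrix whose Cartan
counterpart is the Cartan matrix of the corresponding Dynkin diagram, i.e. the matrix of
pairings `(α_i, α_j^∨)` of a base of `Φ`. -/
def IsExchangeMatrix (Φ : Set (EuclideanSpace ℝ (Fin n)))
    (B : Matrix (Fin n) (Fin n) ℤ) : Prop :=
  IsSkewSymmetrizable B ∧ IsFiniteType B ∧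
  ∃ B₀ : Matrix (Fin n) (Fin n) ℤ, Relation.ReflTransGen Mutation B B₀ ∧
    ∃ α : Fin n → EuclideanSpace ℝ (Fin n), IsBase Φ α ∧
      ∀ i j, (cartanCounterpart B₀ i j : ℝ) = pairing (α i) (α j)

/-- `β` is a companion basis for `B`: a family of roots forming a `ℤ`-basis of the root
lattice `ℤΦ` with `|(β_i, β_j^∨)| = |B_{ij}|` for all `i ≠ j`. -/
def IsCompanionBasis (Φ : Set (EuclideanSpace ℝ (Fin n))) (B : Matrix (Fin n) (Fin n) ℤ)
    (β : Fin n → EuclideanSpace ℝ (Fin n)) : Prop :=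
  (∀ i, β i ∈ Φ) ∧ LinearIndependent ℤ β ∧
  Submodule.span ℤ (Set.range β) = Submodule.span ℤ Φ ∧
  ∀ i j, i ≠ j → |pairing (β i) (β j)| = |(B i j : ℝ)|

/-- The inward mutation `μ_k(𝓑)` of a companion basis: `β_i` is replaced by `s_{β_k}(β_i)`
whenever there is an arrow `i → k` in `Γ(B)` (i.e. `B_{ik} > 0`), and unchanged otherwise. -/
noncomputable def mutateBasis (B : Matrix (Fin n) (Fin n) ℤ) (k : Fin n)
    (β : Fin n → EuclideanSpace ℝ (Fin n)) : Fin n → EuclideanSpace ℝ (Fin n) :=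
  fun i => if 0 < B i k then reflRoot (β k) (β i) else β i

/-- The outward mutation of a companion basis at `k`: `β_i` is replaced by `s_{β_k}(β_i)`
whenever `B_{ik} < 0`, and unchanged otherwise. -/
noncomputable def mutateBasisOut (B : Matrix (Fin n) (Fin n) ℤ) (k : Fin n)
    (β : Fin n → EuclideanSpace ℝ (Fin n)) : Fin n → EuclideanSpace ℝ (Fin n) :=
  fun i => if B i k < 0 then reflRoot (β k) (β i) else β i

section Helpers
variable {n : ℕ}

lemma diag_zero {B : Matrix (Fin n) (Fin n) ℤ} (h : IsSkewSymmetrizable B) (i : Fin n) :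
    B i i = 0 := by
  obtain ⟨d, hd, hB⟩ := h
  have := hB i i
  have := hd i
  nlinarith [hd i, hB i i]

lemma skew_pos_iff {B : Matrix (Fin n) (Fin n) ℤ} (h : IsSkewSymmetrizable B) (i j : Fin n) :
    0 < B i j ↔ B j i < 0 := by
  obtain ⟨d, hd, hB⟩ := h
  constructor <;> intro h1 <;> nlinarith [hd i, hd j, hB i j]

lemma skew_zero_iff {B : Matrix (Fin n) (Fin n) ℤ} (h : IsSkewSymmetrizable B) (i j : Fin n) :
    B i j = 0 ↔ B j i = 0 := by
  obtain ⟨d, hd, hB⟩ := h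
  constructor <;> intro h1 <;> nlinarith [hd i, hd j, hB i j]

lemma skew_neg_iff {B : Matrix (Fin n) (Fin n) ℤ} (h : IsSkewSymmetrizable B) (i j : Fin n) :
    B i j < 0 ↔ 0 < B j i := by
  rw [skew_pos_iff h j i]

lemma mutate_col (k : Fin n) (B : Matrix (Fin n) (Fin n) ℤ) (i : Fin n) :
    mutate k B i k = -B i k := by simp [mutate]

lemma mutate_row (k : Fin n) (B : Matrix (Fin n) (Fin n) ℤ) (j : Fin n) :
    mutate k B k j = -B k j := by simp [mutate]

lemma half_term (x y : ℤ) :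
    (|x| * y + x * |y|) / 2 =
      if 0 < x ∧ 0 < y then x * y else if x < 0 ∧ y < 0 then -(x * y) else 0 := by
  rcases lt_trichotomy x 0 with hx | hx | hx <;> rcases lt_trichotomy y 0 with hy | hy | hy <;>
    simp [abs_of_pos, abs_of_neg, hx, hy, not_lt.mpr, le_of_lt] <;> omega

lemma mutate_entry {k : Fin n} (B : Matrix (Fin n) (Fin n) ℤ) {i j : Fin n}
    (hi : i ≠ k) (hj : j ≠ k) :
    mutate k B i j = B i j +
      (if 0 < B i k ∧ 0 < B k j then B i k * B k j
       else if B i k < 0 ∧ B k j < 0 then -(B i k * B k j) else 0) := by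
  simp [mutate, hi, hj, half_term]

end Helpers
section Tri
variable {n : ℕ}

lemma skew_mutate {B : Matrix (Fin n) (Fin n) ℤ} (h : IsSkewSymmetrizable B) (k : Fin n) :
    IsSkewSymmetrizable (mutate k B) := by
  obtain ⟨d, hd, hB⟩ := h
  have hsk : IsSkewSymmetrizable B := ⟨d, hd, hB⟩
  refine ⟨d, hd, fun i j => ?_⟩
  by_cases hi : i = k
  · subst hi; rw [mutate_row, mutate_col]; linarith [hB i j]
  by_cases hj : j = k
  · subst hj; rw [mutate_row, mutate_col]; linarith [hB i j]
  rw [mutate_entry B hi hj, mutate_entry B hj hi]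
  have h1 := hB i j
  have h2 := hB j k
  have h3 := hB k i
  rcases lt_trichotomy (B i k) 0 with hik | hik | hik <;>
    rcases lt_trichotomy (B k j) 0 with hkj | hkj | hkj
  · have hki : 0 < B k i := (skew_neg_iff hsk i k).mp hik
    have hjk : 0 < B j k := (skew_neg_iff hsk k j).mp hkj
    rw [if_neg (by omega), if_pos (by omega : B i k < 0 ∧ B k j < 0),
      if_pos (by omega : 0 < B j k ∧ 0 < B k i)]
    linear_combination h1 + B k i * h2 - B k j * h3
  · have hjk : B j k = 0 := (skew_zero_iff hsk k j).mp hkj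
    rw [if_neg (by omega), if_neg (by omega), if_neg (by omega), if_neg (by omega)]
    linear_combination h1
  · have hki : 0 < B k i := (skew_neg_iff hsk i k).mp hik
    have hjk : B j k < 0 := (skew_pos_iff hsk k j).mp hkj
    rw [if_neg (by omega), if_neg (by omega), if_neg (by omega), if_neg (by omega)]
    linear_combination h1
  · have hki : B k i = 0 := (skew_zero_iff hsk i k).mp hik
    rw [if_neg (by omega), if_neg (by omega), if_neg (by omega), if_neg (by omega)]
    linear_combination h1
  · have hjk2 : B j k = 0 := (skew_zero_iff hsk k j).mp hkj
    rw [if_neg (by omega), if_neg (by omega), if_neg (by omega), if_neg (by omega)]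
    linear_combination h1
  · have hki : B k i = 0 := (skew_zero_iff hsk i k).mp hik
    rw [if_neg (by omega), if_neg (by omega), if_neg (by omega), if_neg (by omega)]
    linear_combination h1
  · have hki : B k i < 0 := (skew_pos_iff hsk i k).mp hik
    have hjk : 0 < B j k := (skew_neg_iff hsk k j).mp hkj
    rw [if_neg (by omega), if_neg (by omega), if_neg (by omega), if_neg (by omega)]
    linear_combination h1
  · have hjk : B j k = 0 := (skew_zero_iff hsk k j).mp hkj
    rw [if_neg (by omega), if_neg (by omega), if_neg (by omega), if_neg (by omega)]
    linear_combination h1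
  · have hki : B k i < 0 := (skew_pos_iff hsk i k).mp hik
    have hjk : B j k < 0 := (skew_pos_iff hsk k j).mp hkj
    rw [if_pos (by omega : 0 < B i k ∧ 0 < B k j), if_neg (by omega),
      if_pos (by omega : B j k < 0 ∧ B k i < 0)]
    linear_combination h1 - B k i * h2 + B k j * h3

/-- In a finite-type skew-symmetrisable matrix, a path `i → k → j` forces
`B i j + B i k * B k j ≥ 0`. -/
lemma tri_pos {B : Matrix (Fin n) (Fin n) ℤ} (hsk : IsSkewSymmetrizable B)
    (hft : IsFiniteType B) {i j k : Fin n} (hij : i ≠ j) (hik : i ≠ k) (hjk : j ≠ k)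
    (h1 : 0 < B i k) (h2 : 0 < B k j) : 0 ≤ B i j + B i k * B k j := by
  by_contra hcon
  push_neg at hcon
  set B' := mutate k B with hB'
  have hski : B k i < 0 := (skew_pos_iff hsk i k).mp h1
  have hsjk : B j k < 0 := (skew_pos_iff hsk k j).mp h2
  have e1 : B' i j = B i j + B i k * B k j := by
    rw [hB', mutate_entry B hik hjk, if_pos ⟨h1, h2⟩]
  have e2 : B' j i = B j i - B j k * B k i := by
    rw [hB', mutate_entry B hjk hik, if_neg (by omega), if_pos ⟨hsjk, hski⟩]; ring
  have hsk' : IsSkewSymmetrizable B' := skew_mutate hsk k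
  have hB'ij : B' i j < 0 := by omega
  have hB'ji : 0 < B' j i := (skew_neg_iff hsk' i j).mp hB'ij
  have hji : 2 ≤ B j i := by nlinarith
  have hij2 : B i j ≤ -2 := by nlinarith
  have := hft B Relation.ReflTransGen.refl i j
  rw [abs_le] at this
  nlinarith [this.1, this.2]

/-- In a finite-type skew-symmetrisable matrix, a path `k → i`, `j → k` forces
`B i j - B i k * B k j ≤ 0`. -/
lemma tri_neg {B : Matrix (Fin n) (Fin n) ℤ} (hsk : IsSkewSymmetrizable B)
    (hft : IsFiniteType B) {i j k : Fin n} (hij : i ≠ j) (hik : i ≠ k) (hjk : j ≠ k)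
    (h1 : B i k < 0) (h2 : B k j < 0) : B i j - B i k * B k j ≤ 0 := by
  by_contra hcon
  push_neg at hcon
  set B' := mutate k B with hB'
  have hski : 0 < B k i := (skew_neg_iff hsk i k).mp h1
  have hsjk : 0 < B j k := (skew_neg_iff hsk k j).mp h2
  have e1 : B' i j = B i j - B i k * B k j := by
    rw [hB', mutate_entry B hik hjk, if_neg (by omega), if_pos ⟨h1, h2⟩]; ring
  have e2 : B' j i = B j i + B j k * B k i := by
    rw [hB', mutate_entry B hjk hik, if_pos ⟨hsjk, hski⟩]
  have hsk' : IsSkewSymmetrizable B' := skew_mutate hsk k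
  have hB'ij : 0 < B' i j := by omega
  have hB'ji : B' j i < 0 := (skew_pos_iff hsk' i j).mp hB'ij
  have hji : B j i ≤ -2 := by nlinarith
  have hij2 : 2 ≤ B i j := by nlinarith
  have := hft B Relation.ReflTransGen.refl i j
  rw [abs_le] at this
  nlinarith [this.1, this.2]

end Tri
section Geom
variable {n : ℕ}

local notation "E" => EuclideanSpace ℝ (Fin n)

lemma inner_self_ne {α : E} (hα : α ≠ 0) : ⟪α, α⟫ ≠ 0 :=
  fun h => hα (inner_self_eq_zero.mp h)

lemma inner_self_pos' {α : E} (hα : α ≠ 0) : 0 < ⟪α, α⟫ :=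
  lt_of_le_of_ne real_inner_self_nonneg (Ne.symm (inner_self_ne hα))

lemma pairing_self {α : E} (hα : α ≠ 0) : pairing α α = 2 := by
  unfold pairing
  rw [mul_div_assoc, div_self (inner_self_ne hα), mul_one]

lemma pairing_zero_of_inner {u v : E} (h : ⟪u, v⟫ = 0) : pairing u v = 0 := by
  simp [pairing, h]

lemma inner_ne_of_pairing {u v : E} (h : pairing u v ≠ 0) : ⟪u, v⟫ ≠ 0 :=
  fun h0 => h (pairing_zero_of_inner h0)

lemma inner_refl_left (α u v : E) :
    ⟪reflRoot α u, v⟫ = ⟪u, v⟫ - pairing u α * ⟪α, v⟫ := by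
  unfold reflRoot
  rw [inner_sub_left, real_inner_smul_left]

lemma inner_refl_refl {α : E} (hα : α ≠ 0) (u v : E) :
    ⟪reflRoot α u, reflRoot α v⟫ = ⟪u, v⟫ := by
  unfold reflRoot pairing
  rw [inner_sub_left, inner_sub_right, inner_sub_right, real_inner_smul_left,
    real_inner_smul_left, real_inner_smul_right, real_inner_smul_right,
    real_inner_comm α u, real_inner_comm α v]
  have hN := inner_self_ne hα
  generalize ⟪u, v⟫ = x
  generalize hy : ⟪α, u⟫ = y
  generalize hz : ⟪α, v⟫ = z
  generalize hw : ⟪α, α⟫ = w at hN ⊢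
  field_simp
  ring

lemma refl_invol {α : E} (hα : α ≠ 0) (v : E) :
    reflRoot α (reflRoot α v) = v := by
  have hp : pairing (reflRoot α v) α = -pairing v α := by
    unfold pairing
    rw [inner_refl_left]
    unfold pairing
    have hN := inner_self_ne hα
    generalize ⟪v, α⟫ = x
    generalize hw : ⟪α, α⟫ = w at hN ⊢
    field_simp
    ring
  conv_lhs => rw [reflRoot, hp]
  unfold reflRoot
  module

lemma pairing_refl_left (α u v : E) :
    pairing (reflRoot α u) v = pairing u v - pairing u α * pairing α v := by
  unfold pairing
  rw [inner_refl_left]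
  unfold pairing
  ring

lemma pairing_refl_right {α : E} (hα : α ≠ 0) (u v : E) :
    pairing u (reflRoot α v) = pairing u v - pairing u α * pairing α v := by
  have h1 : ⟪reflRoot α v, reflRoot α v⟫ = ⟪v, v⟫ := inner_refl_refl hα v v
  have h2 : ⟪u, reflRoot α v⟫ = ⟪v, u⟫ - pairing v α * ⟪α, u⟫ :=
    (real_inner_comm (reflRoot α v) u).trans (inner_refl_left α v u)
  unfold pairing
  rw [h1, h2]
  unfold pairing
  rw [real_inner_comm u v, real_inner_comm α v, real_inner_comm u α]
  have hN := inner_self_ne hα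
  generalize ⟪u, v⟫ = x
  generalize hy : ⟪u, α⟫ = y
  generalize hz : ⟪α, v⟫ = z
  generalize hV : ⟪v, v⟫ = V
  generalize hw : ⟪α, α⟫ = w at hN ⊢
  rcases eq_or_ne V 0 with hV0 | hV0
  · subst hV0; simp
  · field_simp

lemma pairing_refl_refl {α : E} (hα : α ≠ 0) (u v : E) :
    pairing (reflRoot α u) (reflRoot α v) = pairing u v := by
  have h1 : ⟪reflRoot α v, reflRoot α v⟫ = ⟪v, v⟫ := inner_refl_refl hα v v
  have h2 : ⟪reflRoot α u, reflRoot α v⟫ = ⟪u, v⟫ := inner_refl_refl hα u v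
  unfold pairing
  rw [h1, h2]

end Geom
section Gram
variable {n : ℕ}

local notation "E" => EuclideanSpace ℝ (Fin n)

lemma sqrt_bound {A B a : ℝ} (hA : 0 < A) (hB : 0 < B) (ha : a < 0)
    (h : A * B ≤ 4 * a ^ 2) : Real.sqrt A * Real.sqrt B ≤ -2 * a := by
  have h1 : Real.sqrt A ^ 2 = A := Real.sq_sqrt hA.le
  have h2 : Real.sqrt B ^ 2 = B := Real.sq_sqrt hB.le
  nlinarith [Real.sqrt_nonneg A, Real.sqrt_nonneg B, sq_nonneg (Real.sqrt A * Real.sqrt B + 2 * a)]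

lemma obtuse_dependent {u v w : E} (hu : u ≠ 0) (hv : v ≠ 0) (hw : w ≠ 0)
    (h1 : ⟪u, u⟫ * ⟪v, v⟫ ≤ 4 * ⟪u, v⟫ ^ 2)
    (h2 : ⟪v, v⟫ * ⟪w, w⟫ ≤ 4 * ⟪v, w⟫ ^ 2)
    (h3 : ⟪w, w⟫ * ⟪u, u⟫ ≤ 4 * ⟪w, u⟫ ^ 2)
    (ha : ⟪u, v⟫ < 0) (hb : ⟪v, w⟫ < 0) (hc : ⟪w, u⟫ < 0) :
    ∃ p q r : ℝ, 0 < p ∧ 0 < q ∧ 0 < r ∧ p • u + q • v + r • w = 0 := by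
  have hA : 0 < ⟪u, u⟫ := inner_self_pos' hu
  have hB : 0 < ⟪v, v⟫ := inner_self_pos' hv
  have hC : 0 < ⟪w, w⟫ := inner_self_pos' hw
  set sA := Real.sqrt ⟪u, u⟫ with hsA'
  set sB := Real.sqrt ⟪v, v⟫ with hsB'
  set sC := Real.sqrt ⟪w, w⟫ with hsC'
  have hsA : 0 < sA := Real.sqrt_pos.mpr hA
  have hsB : 0 < sB := Real.sqrt_pos.mpr hB
  have hsC : 0 < sC := Real.sqrt_pos.mpr hC
  have hsA2 : sA ^ 2 = ⟪u, u⟫ := Real.sq_sqrt hA.le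
  have hsB2 : sB ^ 2 = ⟪v, v⟫ := Real.sq_sqrt hB.le
  have hsC2 : sC ^ 2 = ⟪w, w⟫ := Real.sq_sqrt hC.le
  have e1 : sA * sB ≤ -2 * ⟪u, v⟫ := sqrt_bound hA hB ha h1
  have e2 : sB * sC ≤ -2 * ⟪v, w⟫ := sqrt_bound hB hC hb h2
  have e3 : sC * sA ≤ -2 * ⟪w, u⟫ := sqrt_bound hC hA hc h3
  refine ⟨sB * sC, sC * sA, sA * sB, mul_pos hsB hsC, mul_pos hsC hsA, mul_pos hsA hsB, ?_⟩
  set x := (sB * sC) • u + (sC * sA) • v + (sA * sB) • w with hx'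
  have hexp : ⟪x, x⟫ = (sB * sC) ^ 2 * ⟪u, u⟫ + (sC * sA) ^ 2 * ⟪v, v⟫
      + (sA * sB) ^ 2 * ⟪w, w⟫
      + 2 * ((sB * sC) * (sC * sA)) * ⟪u, v⟫ + 2 * ((sC * sA) * (sA * sB)) * ⟪v, w⟫
      + 2 * ((sB * sC) * (sA * sB)) * ⟪w, u⟫ := by
    rw [hx']
    simp only [inner_add_left, inner_add_right, real_inner_smul_left, real_inner_smul_right]
    rw [real_inner_comm u v, real_inner_comm v w, real_inner_comm w u]
    ring
  have hxx : ⟪x, x⟫ ≤ 0 := by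
    rw [hexp]
    rw [← hsA2, ← hsB2, ← hsC2]
    generalize hga : ⟪u, v⟫ = a at e1 ⊢
    generalize hgb : ⟪v, w⟫ = b at e2 ⊢
    generalize hgc : ⟪w, u⟫ = c at e3 ⊢
    nlinarith [mul_le_mul_of_nonneg_left e1 (mul_nonneg hsA.le hsB.le),
      mul_le_mul_of_nonneg_left e2 (mul_nonneg hsB.le hsC.le),
      mul_le_mul_of_nonneg_left e3 (mul_nonneg hsC.le hsA.le),
      mul_pos hsA hsB, mul_pos hsB hsC, mul_pos hsC hsA,
      mul_pos (mul_pos hsA hsB) hsC]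
  have : x = 0 := inner_self_eq_zero.mp (le_antisymm hxx real_inner_self_nonneg)
  exact this

lemma pairing_int {Φ : Set E} (hΦ : IsRootSystem Φ) {u v : E} (hu : u ∈ Φ) (hv : v ∈ Φ) :
    ∃ z : ℤ, pairing u v = z := hΦ.2.2.2.2.2 v hv u hu

lemma pairing_bound {Φ : Set E} (hΦ : IsRootSystem Φ) {u v : E} (hu : u ∈ Φ) (hv : v ∈ Φ)
    (h : ⟪u, v⟫ ≠ 0) : ⟪u, u⟫ * ⟪v, v⟫ ≤ 4 * ⟪u, v⟫ ^ 2 := by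
  have hu0 : u ≠ 0 := hΦ.2.1 u hu
  have hv0 : v ≠ 0 := hΦ.2.1 v hv
  have hA : 0 < ⟪u, u⟫ := inner_self_pos' hu0
  have hB : 0 < ⟪v, v⟫ := inner_self_pos' hv0
  -- pairing u v = 2⟪u,v⟫/⟪v,v⟫  is a nonzero integer
  obtain ⟨z1, hz1⟩ := pairing_int hΦ hu hv
  obtain ⟨z2, hz2⟩ := pairing_int hΦ hv hu
  have hz1ne : (z1 : ℝ) ≠ 0 := by
    rw [← hz1]
    unfold pairing
    exact div_ne_zero (by simpa using h) (ne_of_gt hB)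
  have hz2ne : (z2 : ℝ) ≠ 0 := by
    rw [← hz2]
    unfold pairing
    have : ⟪v, u⟫ ≠ 0 := by rw [real_inner_comm u v]; exact h
    exact div_ne_zero (by simpa using this) (ne_of_gt hA)
  have h1 : (1 : ℝ) ≤ |(z1 : ℝ)| := by
    have hne : z1 ≠ 0 := by exact_mod_cast hz1ne
    exact_mod_cast Int.one_le_abs hne
  have h2 : (1 : ℝ) ≤ |(z2 : ℝ)| := by
    have hne : z2 ≠ 0 := by exact_mod_cast hz2ne
    exact_mod_cast Int.one_le_abs hne
  have e1 : |(z1 : ℝ)| = 2 * |⟪u, v⟫| / ⟪v, v⟫ := by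
    rw [← hz1]
    unfold pairing
    rw [abs_div, abs_of_pos hB, abs_mul]
    norm_num
  have e2 : |(z2 : ℝ)| = 2 * |⟪u, v⟫| / ⟪u, u⟫ := by
    rw [← hz2]
    unfold pairing
    rw [abs_div, abs_of_pos hA, abs_mul, real_inner_comm u v]
    norm_num
  rw [e1] at h1
  rw [e2] at h2
  rw [le_div_iff₀ hB] at h1
  rw [le_div_iff₀ hA] at h2
  nlinarith [abs_nonneg ⟪u, v⟫, sq_abs ⟪u, v⟫]

end Gram
section Triple
variable {n : ℕ}

local notation "E" => EuclideanSpace ℝ (Fin n)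

lemma triple_product_pos {Φ : Set E} (hΦ : IsRootSystem Φ) {u v w : E}
    (hu : u ∈ Φ) (hv : v ∈ Φ) (hw : w ∈ Φ)
    (hind : ∀ p q r : ℝ, p • u + q • v + r • w = 0 → p = 0)
    (ha : ⟪u, v⟫ ≠ 0) (hb : ⟪v, w⟫ ≠ 0) (hc : ⟪w, u⟫ ≠ 0) :
    0 < ⟪u, v⟫ * (⟪v, w⟫ * ⟪w, u⟫) := by
  have hu0 : u ≠ 0 := hΦ.2.1 u hu
  have hv0 : v ≠ 0 := hΦ.2.1 v hv
  have hw0 : w ≠ 0 := hΦ.2.1 w hw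
  have h1 : ⟪u, u⟫ * ⟪v, v⟫ ≤ 4 * ⟪u, v⟫ ^ 2 := pairing_bound hΦ hu hv ha
  have h2 : ⟪v, v⟫ * ⟪w, w⟫ ≤ 4 * ⟪v, w⟫ ^ 2 := pairing_bound hΦ hv hw hb
  have h3 : ⟪w, w⟫ * ⟪u, u⟫ ≤ 4 * ⟪w, u⟫ ^ 2 := pairing_bound hΦ hw hu hc
  by_contra hcon
  push_neg at hcon
  have hprod : ⟪u, v⟫ * (⟪v, w⟫ * ⟪w, u⟫) < 0 :=
    lt_of_le_of_ne hcon (mul_ne_zero ha (mul_ne_zero hb hc))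
  rcases lt_or_gt_of_ne ha with ha' | ha' <;> rcases lt_or_gt_of_ne hb with hb' | hb'
  · -- a < 0, b < 0 : then c < 0
    have hc' : ⟪w, u⟫ < 0 := by nlinarith [hprod, mul_pos_of_neg_of_neg ha' hb']
    obtain ⟨p, q, r, hp, hq, hr, hsum⟩ := obtuse_dependent hu0 hv0 hw0 h1 h2 h3 ha' hb' hc'
    exact absurd (hind p q r hsum) (ne_of_gt hp)
  · -- a < 0, b > 0 : then c > 0; use (u, v, -w)
    have hc' : 0 < ⟪w, u⟫ := by nlinarith [hprod, mul_neg_of_neg_of_pos ha' hb']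
    have k1 : ⟪u, u⟫ * ⟪v, v⟫ ≤ 4 * ⟪u, v⟫ ^ 2 := h1
    have k2 : ⟪v, v⟫ * ⟪(-w : E), -w⟫ ≤ 4 * ⟪v, (-w : E)⟫ ^ 2 := by
      rw [inner_neg_neg, inner_neg_right]; nlinarith
    have k3 : ⟪(-w : E), -w⟫ * ⟪u, u⟫ ≤ 4 * ⟪(-w : E), u⟫ ^ 2 := by
      rw [inner_neg_neg, inner_neg_left]; nlinarith
    have kb : ⟪v, (-w : E)⟫ < 0 := by rw [inner_neg_right]; linarith
    have kc : ⟪(-w : E), u⟫ < 0 := by rw [inner_neg_left]; linarith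
    obtain ⟨p, q, r, hp, hq, hr, hsum⟩ :=
      obtuse_dependent hu0 hv0 (neg_ne_zero.mpr hw0) k1 k2 k3 ha' kb kc
    have hT : p • u + q • v + (-r) • w = 0 := by rw [← hsum]; module
    exact absurd (hind p q (-r) hT) (ne_of_gt hp)
  · -- a > 0, b < 0 : then c > 0; use (u, -v, -w)
    have hc' : 0 < ⟪w, u⟫ := by nlinarith [hprod, mul_neg_of_pos_of_neg ha' hb']
    have k1 : ⟪u, u⟫ * ⟪(-v : E), -v⟫ ≤ 4 * ⟪u, (-v : E)⟫ ^ 2 := by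
      rw [inner_neg_neg, inner_neg_right]; nlinarith
    have k2 : ⟪(-v : E), -v⟫ * ⟪(-w : E), -w⟫ ≤ 4 * ⟪(-v : E), (-w : E)⟫ ^ 2 := by
      rw [inner_neg_neg, inner_neg_neg, inner_neg_neg]; nlinarith
    have k3 : ⟪(-w : E), -w⟫ * ⟪u, u⟫ ≤ 4 * ⟪(-w : E), u⟫ ^ 2 := by
      rw [inner_neg_neg, inner_neg_left]; nlinarith
    have ka : ⟪u, (-v : E)⟫ < 0 := by rw [inner_neg_right]; linarith
    have kb : ⟪(-v : E), (-w : E)⟫ < 0 := by rw [inner_neg_neg]; linarith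
    have kc : ⟪(-w : E), u⟫ < 0 := by rw [inner_neg_left]; linarith
    obtain ⟨p, q, r, hp, hq, hr, hsum⟩ :=
      obtuse_dependent hu0 (neg_ne_zero.mpr hv0) (neg_ne_zero.mpr hw0) k1 k2 k3 ka kb kc
    have hT : p • u + (-q) • v + (-r) • w = 0 := by rw [← hsum]; module
    exact absurd (hind p (-q) (-r) hT) (ne_of_gt hp)
  · -- a > 0, b > 0 : then c < 0; use (u, -v, w)
    have hc' : ⟪w, u⟫ < 0 := by nlinarith [hprod, mul_pos ha' hb']
    have k1 : ⟪u, u⟫ * ⟪(-v : E), -v⟫ ≤ 4 * ⟪u, (-v : E)⟫ ^ 2 := by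
      rw [inner_neg_neg, inner_neg_right]; nlinarith
    have k2 : ⟪(-v : E), -v⟫ * ⟪w, w⟫ ≤ 4 * ⟪(-v : E), w⟫ ^ 2 := by
      rw [inner_neg_neg, inner_neg_left]; nlinarith
    have ka : ⟪u, (-v : E)⟫ < 0 := by rw [inner_neg_right]; linarith
    have kb : ⟪(-v : E), w⟫ < 0 := by rw [inner_neg_left]; linarith
    obtain ⟨p, q, r, hp, hq, hr, hsum⟩ :=
      obtuse_dependent hu0 (neg_ne_zero.mpr hv0) hw0 k1 k2 h3 ka kb hc'
    have hT : p • u + (-q) • v + r • w = 0 := by rw [← hsum]; module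
    exact absurd (hind p (-q) r hT) (ne_of_gt hp)

end Triple
section LI
variable {n : ℕ}

local notation "E" => EuclideanSpace ℝ (Fin n)

lemma real_li_of_span {Φ : Set E} (hΦ : IsRootSystem Φ) {γ : Fin n → E}
    (hsp : Submodule.span ℤ (Set.range γ) = Submodule.span ℤ Φ) :
    LinearIndependent ℝ γ := by
  have htop : ⊤ ≤ Submodule.span ℝ (Set.range γ) := by
    rw [← hΦ.2.2.1, Submodule.span_le]
    intro x hx
    have h1 : x ∈ (Submodule.span ℤ Φ : Set E) := Submodule.subset_span hx
    rw [← hsp] at h1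
    exact Submodule.span_subset_span ℤ ℝ _ h1
  exact linearIndependent_of_top_le_span_of_card_eq_finrank htop (by simp)

lemma int_li_of_span {Φ : Set E} (hΦ : IsRootSystem Φ) {γ : Fin n → E}
    (hsp : Submodule.span ℤ (Set.range γ) = Submodule.span ℤ Φ) :
    LinearIndependent ℤ γ := by
  refine (real_li_of_span hΦ hsp).restrict_scalars ?_
  intro x y h
  have : (x : ℝ) = y := by simpa using h
  exact_mod_cast this

lemma li_triple {γ : Fin n → E} (h : LinearIndependent ℝ γ) {i j k : Fin n}
    (hij : i ≠ j) (hik : i ≠ k) (hjk : j ≠ k) :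
    ∀ p q r : ℝ, p • γ i + q • γ j + r • γ k = 0 → p = 0 := by
  intro p q r hsum
  have hinj : Function.Injective ![i, j, k] := by
    intro x y hxy
    fin_cases x <;> fin_cases y <;> simp_all
  have h3 := h.comp ![i, j, k] hinj
  have := Fintype.linearIndependent_iff.mp h3 ![p, q, r] ?_ 0
  · simpa using this
  · simpa [Fin.sum_univ_three] using hsum

end LI
section Magic

lemma abs_sign_magic {P Q R : ℝ} {a b c t : ℤ}
    (ha : 0 < a) (hb : 0 < b)
    (hP : |P| = |(c : ℝ)|) (hQR : |Q * R| = ((a * b : ℤ) : ℝ))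
    (htrip : c ≠ 0 → 0 < P * (Q * R))
    (hcase : (c = t + a * b ∧ 0 ≤ c) ∨ (c = t - a * b ∧ c ≤ 0)) :
    |P - Q * R| = |(t : ℝ)| := by
  have hab : (0 : ℝ) < (a : ℝ) * (b : ℝ) := by
    have : (0 : ℤ) < a * b := mul_pos ha hb
    exact_mod_cast this
  by_cases hc : c = 0
  · subst hc
    have hP0 : P = 0 := abs_eq_zero.mp (by simpa using hP)
    rw [hP0, zero_sub, abs_neg, hQR]
    rcases hcase with ⟨h1, _⟩ | ⟨h1, _⟩
    · have : t = -(a * b) := by omega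
      rw [this]; push_cast; rw [abs_neg, abs_of_pos hab]
    · have : t = a * b := by omega
      rw [this]; push_cast; rw [abs_of_pos hab]
  · have htrip' := htrip hc
    have hQRne : Q * R ≠ 0 := by
      intro h0; rw [h0, mul_zero] at htrip'; exact lt_irrefl _ htrip'
    have hPne : P ≠ 0 := by
      intro h0; rw [h0, zero_mul] at htrip'; exact lt_irrefl _ htrip'
    rcases lt_or_gt_of_ne hPne with hPneg | hPpos
    · -- P < 0, hence Q*R < 0, so Q*R = -(a*b)
      have hQRneg : Q * R < 0 := by nlinarith
      have eQR : Q * R = -((a : ℝ) * b) := by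
        have : -(Q * R) = (a : ℝ) * b := by
          rw [← abs_of_pos (neg_pos.mpr hQRneg), abs_neg, hQR]; push_cast; ring
        linarith
      rcases hcase with ⟨h1, h2⟩ | ⟨h1, h2⟩
      · -- c > 0 (c ≠ 0, c ≥ 0); P = -c
        have hcpos : (0 : ℝ) < (c : ℝ) := by exact_mod_cast lt_of_le_of_ne h2 (Ne.symm hc)
        have eP : P = -(c : ℝ) := by
          have : -P = (c : ℝ) := by
            rw [← abs_of_pos (neg_pos.mpr hPneg), abs_neg, hP, abs_of_pos hcpos]
          linarith
        rw [eP, eQR]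
        have h3 : (c : ℝ) = (t : ℝ) + (a : ℝ) * b := by exact_mod_cast h1
        have : -(c : ℝ) - -((a : ℝ) * b) = -(t : ℝ) := by rw [h3]; ring
        rw [this, abs_neg]
      · -- c < 0; P = c
        have hcneg : (c : ℝ) < 0 := by exact_mod_cast lt_of_le_of_ne h2 hc
        have eP : P = (c : ℝ) := by
          have : -P = -(c : ℝ) := by rw [← abs_of_neg hPneg, hP, abs_of_neg hcneg]
          linarith
        rw [eP, eQR]
        have h3 : (c : ℝ) = (t : ℝ) - (a : ℝ) * b := by exact_mod_cast h1
        have : (c : ℝ) - -((a : ℝ) * b) = (t : ℝ) := by rw [h3]; ring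
        rw [this]
    · -- P > 0, hence Q*R > 0 = a*b
      have hQRpos : 0 < Q * R := by nlinarith
      have eQR : Q * R = (a : ℝ) * b := by
        rw [← abs_of_pos hQRpos, hQR]; push_cast; ring
      rcases hcase with ⟨h1, h2⟩ | ⟨h1, h2⟩
      · have hcpos : (0 : ℝ) < (c : ℝ) := by exact_mod_cast lt_of_le_of_ne h2 (Ne.symm hc)
        have eP : P = (c : ℝ) := by rw [← abs_of_pos hPpos, hP, abs_of_pos hcpos]
        rw [eP, eQR]
        have h3 : (c : ℝ) = (t : ℝ) + (a : ℝ) * b := by exact_mod_cast h1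
        have : (c : ℝ) - (a : ℝ) * b = (t : ℝ) := by rw [h3]; ring
        rw [this]
      · have hcneg : (c : ℝ) < 0 := by exact_mod_cast lt_of_le_of_ne h2 hc
        have eP : P = -(c : ℝ) := by
          rw [← abs_of_pos hPpos, hP, abs_of_neg hcneg]
        rw [eP, eQR]
        have h3 : (c : ℝ) = (t : ℝ) - (a : ℝ) * b := by exact_mod_cast h1
        have : -(c : ℝ) - (a : ℝ) * b = -(t : ℝ) := by rw [h3]; ring
        rw [this, abs_neg]

end Magic
section Main
variable {n : ℕ}

local notation "E" => EuclideanSpace ℝ (Fin n)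

lemma mutateOut_isCompanion {Φ : Set E} (hΦ : IsRootSystem Φ)
    {B : Matrix (Fin n) (Fin n) ℤ} (hsk : IsSkewSymmetrizable B) (hft : IsFiniteType B)
    (k : Fin n) {β' : Fin n → E} (h : IsCompanionBasis Φ (mutate k B) β') :
    IsCompanionBasis Φ B (mutateBasisOut (mutate k B) k β') := by
  obtain ⟨hroots', hli', hspan', habs'⟩ := h
  have hαΦ : β' k ∈ Φ := hroots' k
  have hα0 : β' k ≠ 0 := hΦ.2.1 _ hαΦ
  have hBkk : B k k = 0 := diag_zero hsk k
  set β := mutateBasisOut (mutate k B) k β' with hβdef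
  have hβ : ∀ i, β i = if 0 < B i k then reflRoot (β' k) (β' i) else β' i := by
    intro i
    rw [hβdef]
    unfold mutateBasisOut
    rw [mutate_col]
    simp only [neg_lt_zero]
  have hβk : β k = β' k := by rw [hβ k, if_neg (by omega)]
  have hroots : ∀ i, β i ∈ Φ := by
    intro i
    rw [hβ i]
    split
    · exact hΦ.2.2.2.2.1 (β' k) hαΦ (β' i) (hroots' i)
    · exact hroots' i
  have hRli' : LinearIndependent ℝ β' := real_li_of_span hΦ hspan'
  have hspan : Submodule.span ℤ (Set.range β) = Submodule.span ℤ Φ := by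
    apply le_antisymm
    · rw [Submodule.span_le]
      rintro x ⟨i, rfl⟩
      exact Submodule.subset_span (hroots i)
    · rw [← hspan', Submodule.span_le]
      rintro x ⟨i, rfl⟩
      by_cases hi : 0 < B i k
      · obtain ⟨z, hz⟩ := pairing_int hΦ (hroots' i) hαΦ
        have hexp : β' i = β i + z • β k := by
          rw [hβ i, if_pos hi, hβk]
          unfold reflRoot
          rw [← Int.cast_smul_eq_zsmul ℝ z (β' k), ← hz]
          module
        rw [hexp]
        exact Submodule.add_mem _ (Submodule.subset_span ⟨i, rfl⟩)
          (Submodule.smul_mem _ z (Submodule.subset_span ⟨k, rfl⟩))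
      · have hexp : β' i = β i := by rw [hβ i, if_neg hi]
        rw [hexp]
        exact Submodule.subset_span ⟨i, rfl⟩
  refine ⟨hroots, int_li_of_span hΦ hspan, hspan, ?_⟩
  intro i j hij
  -- helper : |pairing β'_x β'_k| = |B x k| in ℝ, etc.
  have hcolabs : ∀ x, x ≠ k → |pairing (β' x) (β' k)| = |(B x k : ℝ)| := by
    intro x hx
    rw [habs' x k hx, mutate_col]
    push_cast
    rw [abs_neg]
  have hrowabs : ∀ x, x ≠ k → |pairing (β' k) (β' x)| = |(B k x : ℝ)| := by
    intro x hx
    rw [habs' k x (Ne.symm hx), mutate_row]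
    push_cast
    rw [abs_neg]
  rw [hβ i, hβ j]
  by_cases hi : 0 < B i k <;> by_cases hj : 0 < B j k
  · -- both reflected
    rw [if_pos hi, if_pos hj, pairing_refl_refl hα0, habs' i j hij]
    have hik : i ≠ k := by rintro rfl; omega
    have hjk : j ≠ k := by rintro rfl; omega
    have hkj : B k j < 0 := (skew_pos_iff hsk j k).mp hj
    have : mutate k B i j = B i j := by
      rw [mutate_entry B hik hjk, if_neg (by omega), if_neg (by omega)]
      ring
    rw [this]
  · -- i reflected, j not
    rw [if_pos hi, if_neg hj, pairing_refl_left]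
    have hik : i ≠ k := by rintro rfl; omega
    by_cases hjk : j = k
    · subst hjk
      rw [pairing_self hα0]
      have e : pairing (β' i) (β' j) - pairing (β' i) (β' j) * 2
          = -(pairing (β' i) (β' j)) := by ring
      rw [e, abs_neg]
      exact hcolabs i hik
    · have hkj0 : 0 ≤ B k j := by
        by_contra hcon
        push_neg at hcon
        have := (skew_neg_iff hsk k j).mp hcon
        omega
      rcases eq_or_lt_of_le hkj0 with hkj | hkj
      · -- B k j = 0
        have h0 : pairing (β' k) (β' j) = 0 := by
          have := hrowabs j hjk
          rw [← hkj] at this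
          simpa using abs_eq_zero.mp (by simpa using this)
        rw [h0, mul_zero, sub_zero, habs' i j hij]
        have : mutate k B i j = B i j := by
          rw [mutate_entry B hik hjk, if_neg (by omega), if_neg (by omega)]
          ring
        rw [this]
      · -- main case C : 0 < B i k, 0 < B k j
        have hentry : mutate k B i j = B i j + B i k * B k j := by
          rw [mutate_entry B hik hjk, if_pos ⟨hi, hkj⟩]
        have htri : 0 ≤ B i j + B i k * B k j := tri_pos hsk hft hij hik hjk hi hkj
        apply abs_sign_magic (a := B i k) (b := B k j) (c := B i j + B i k * B k j)
          (t := B i j) hi hkj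
        · rw [habs' i j hij, hentry]
        · rw [abs_mul]
          have e1 : |pairing (β' i) (β' k)| = ((B i k : ℤ) : ℝ) := by
            rw [hcolabs i hik, abs_of_pos (by exact_mod_cast hi)]
          have e2 : |pairing (β' k) (β' j)| = ((B k j : ℤ) : ℝ) := by
            rw [hrowabs j hjk, abs_of_pos (by exact_mod_cast hkj)]
          rw [e1, e2]
          push_cast
          ring
        · intro hcne
          have hPij : pairing (β' i) (β' j) ≠ 0 := by
            intro h0
            have h1 := habs' i j hij
            rw [hentry, h0, abs_zero] at h1
            have h2 : ((B i j + B i k * B k j : ℤ) : ℝ) ≠ 0 := by exact_mod_cast hcne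
            exact h2 (abs_eq_zero.mp h1.symm)
          have hPik : pairing (β' i) (β' k) ≠ 0 := by
            intro h0
            have h1 := hcolabs i hik
            rw [h0, abs_zero] at h1
            have h2 : (B i k : ℝ) ≠ 0 := by exact_mod_cast (by omega : B i k ≠ 0)
            exact h2 (abs_eq_zero.mp h1.symm)
          have hPkj : pairing (β' k) (β' j) ≠ 0 := by
            intro h0
            have h1 := hrowabs j hjk
            rw [h0, abs_zero] at h1
            have h2 : (B k j : ℝ) ≠ 0 := by exact_mod_cast (by omega : B k j ≠ 0)
            exact h2 (abs_eq_zero.mp h1.symm)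
          have hIuv : ⟪β' i, β' j⟫ ≠ 0 := inner_ne_of_pairing hPij
          have hIvw : ⟪β' j, β' k⟫ ≠ 0 := by
            rw [real_inner_comm (β' k) (β' j)]
            exact inner_ne_of_pairing hPkj
          have hIwu : ⟪β' k, β' i⟫ ≠ 0 := by
            rw [real_inner_comm (β' i) (β' k)]
            exact inner_ne_of_pairing hPik
          have htriple := triple_product_pos hΦ (hroots' i) (hroots' j) (hroots' k)
            (li_triple hRli' hij hik hjk) hIuv hIvw hIwu
          have hid : pairing (β' i) (β' j) * (pairing (β' i) (β' k) * pairing (β' k) (β' j))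
              = 8 * (⟪β' i, β' j⟫ * (⟪β' j, β' k⟫ * ⟪β' k, β' i⟫))
                / (⟪β' j, β' j⟫ ^ 2 * ⟪β' k, β' k⟫) := by
            unfold pairing
            rw [real_inner_comm (β' k) (β' i), real_inner_comm (β' j) (β' k)]
            ring
          rw [hid]
          apply div_pos
          · nlinarith [htriple]
          · exact mul_pos (pow_pos (inner_self_pos' (hΦ.2.1 _ (hroots' j))) 2)
              (inner_self_pos' hα0)
        · left
          exact ⟨rfl, htri⟩
  · -- j reflected, i not
    rw [if_neg hi, if_pos hj, pairing_refl_right hα0]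
    have hjk : j ≠ k := by rintro rfl; omega
    by_cases hik : i = k
    · subst hik
      rw [pairing_self hα0]
      have e : pairing (β' i) (β' j) - 2 * pairing (β' i) (β' j)
          = -(pairing (β' i) (β' j)) := by ring
      rw [e, abs_neg]
      exact hrowabs j hjk
    · have hkj0 : B k j < 0 := (skew_pos_iff hsk j k).mp hj
      rcases lt_trichotomy (B i k) 0 with hikneg | hik0 | hikpos
      · -- main case D : B i k < 0, B k j < 0
        have hentry : mutate k B i j = B i j - B i k * B k j := by
          rw [mutate_entry B hik hjk, if_neg (by omega), if_pos ⟨hikneg, hkj0⟩]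
          ring
        have htri : B i j - B i k * B k j ≤ 0 := tri_neg hsk hft hij hik hjk hikneg hkj0
        apply abs_sign_magic (a := -(B i k)) (b := -(B k j))
          (c := B i j - B i k * B k j) (t := B i j) (by omega) (by omega)
        · rw [habs' i j hij, hentry]
        · rw [abs_mul]
          have e1 : |pairing (β' i) (β' k)| = ((-(B i k) : ℤ) : ℝ) := by
            rw [hcolabs i hik]
            push_cast
            rw [abs_of_neg (by exact_mod_cast hikneg)]
          have e2 : |pairing (β' k) (β' j)| = ((-(B k j) : ℤ) : ℝ) := by
            rw [hrowabs j hjk]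
            push_cast
            rw [abs_of_neg (by exact_mod_cast hkj0)]
          rw [e1, e2]
          push_cast
          ring
        · intro hcne
          have hPij : pairing (β' i) (β' j) ≠ 0 := by
            intro h0
            have h1 := habs' i j hij
            rw [hentry, h0, abs_zero] at h1
            have h2 : ((B i j - B i k * B k j : ℤ) : ℝ) ≠ 0 := by exact_mod_cast hcne
            exact h2 (abs_eq_zero.mp h1.symm)
          have hPik : pairing (β' i) (β' k) ≠ 0 := by
            intro h0
            have h1 := hcolabs i hik
            rw [h0, abs_zero] at h1
            have h2 : (B i k : ℝ) ≠ 0 := by exact_mod_cast (by omega : B i k ≠ 0)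
            exact h2 (abs_eq_zero.mp h1.symm)
          have hPkj : pairing (β' k) (β' j) ≠ 0 := by
            intro h0
            have h1 := hrowabs j hjk
            rw [h0, abs_zero] at h1
            have h2 : (B k j : ℝ) ≠ 0 := by exact_mod_cast (by omega : B k j ≠ 0)
            exact h2 (abs_eq_zero.mp h1.symm)
          have hIuv : ⟪β' i, β' j⟫ ≠ 0 := inner_ne_of_pairing hPij
          have hIvw : ⟪β' j, β' k⟫ ≠ 0 := by
            rw [real_inner_comm (β' k) (β' j)]
            exact inner_ne_of_pairing hPkj
          have hIwu : ⟪β' k, β' i⟫ ≠ 0 := by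
            rw [real_inner_comm (β' i) (β' k)]
            exact inner_ne_of_pairing hPik
          have htriple := triple_product_pos hΦ (hroots' i) (hroots' j) (hroots' k)
            (li_triple hRli' hij hik hjk) hIuv hIvw hIwu
          have hid : pairing (β' i) (β' j) * (pairing (β' i) (β' k) * pairing (β' k) (β' j))
              = 8 * (⟪β' i, β' j⟫ * (⟪β' j, β' k⟫ * ⟪β' k, β' i⟫))
                / (⟪β' j, β' j⟫ ^ 2 * ⟪β' k, β' k⟫) := by
            unfold pairing
            rw [real_inner_comm (β' k) (β' i), real_inner_comm (β' j) (β' k)]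
            ring
          rw [hid]
          apply div_pos
          · nlinarith [htriple]
          · exact mul_pos (pow_pos (inner_self_pos' (hΦ.2.1 _ (hroots' j))) 2)
              (inner_self_pos' hα0)
        · right
          refine ⟨by ring, htri⟩
      · -- B i k = 0
        have h0 : pairing (β' i) (β' k) = 0 := by
          have h1 := hcolabs i hik
          rw [hik0] at h1
          simpa using abs_eq_zero.mp (by simpa using h1)
        rw [h0, zero_mul, sub_zero, habs' i j hij]
        have : mutate k B i j = B i j := by
          rw [mutate_entry B hik hjk, if_neg (by omega), if_neg (by omega)]
          ring
        rw [this]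
      · omega
  · -- neither reflected
    rw [if_neg hi, if_neg hj, habs' i j hij]
    by_cases hik : i = k
    · subst hik
      rw [mutate_row]
      push_cast
      rw [abs_neg]
    by_cases hjk : j = k
    · subst hjk
      rw [mutate_col]
      push_cast
      rw [abs_neg]
    · have hkj0 : 0 ≤ B k j := by
        by_contra hcon
        push_neg at hcon
        have := (skew_neg_iff hsk k j).mp hcon
        omega
      have : mutate k B i j = B i j := by
        rw [mutate_entry B hik hjk, if_neg (by omega), if_neg (by omega)]
        ring
      rw [this]

end Main
/-- Remark 6.5: every companion basis for `μ_k(B)` is the inward mutation at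
`k` of some companion basis for `B`; indeed inward mutation at `k` (with respect to `B`) and
outward mutation at `k` (with respect to `μ_k(B)`) are mutually inverse operations. -/
theorem companion_basis_mutation_surjective
    (Φ : Set (EuclideanSpace ℝ (Fin n))) (hΦ : IsRootSystem Φ)
    (B : Matrix (Fin n) (Fin n) ℤ) (hB : IsExchangeMatrix Φ B) (k : Fin n) :
    (∀ β' : Fin n → EuclideanSpace ℝ (Fin n), IsCompanionBasis Φ (mutate k B) β' →
      ∃ β : Fin n → EuclideanSpace ℝ (Fin n),
        IsCompanionBasis Φ B β ∧ β' = mutateBasis B k β) ∧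
    (∀ β : Fin n → EuclideanSpace ℝ (Fin n), IsCompanionBasis Φ B β →
      mutateBasisOut (mutate k B) k (mutateBasis B k β) = β) ∧
    (∀ β' : Fin n → EuclideanSpace ℝ (Fin n), IsCompanionBasis Φ (mutate k B) β' →
      mutateBasis B k (mutateBasisOut (mutate k B) k β') = β') := by
  obtain ⟨hsk, hft, -⟩ := hB
  have hBkk : B k k = 0 := diag_zero hsk k
  have part3 : ∀ β' : Fin n → EuclideanSpace ℝ (Fin n),
      IsCompanionBasis Φ (mutate k B) β' →
      mutateBasis B k (mutateBasisOut (mutate k B) k β') = β' := by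
    intro β' h
    have hα0 : β' k ≠ 0 := hΦ.2.1 _ (h.1 k)
    have hγ : ∀ i, mutateBasisOut (mutate k B) k β' i
        = if 0 < B i k then reflRoot (β' k) (β' i) else β' i := by
      intro i
      unfold mutateBasisOut
      rw [mutate_col]
      simp only [neg_lt_zero]
    have hγk : mutateBasisOut (mutate k B) k β' k = β' k := by
      rw [hγ k, if_neg (by omega)]
    funext i
    show (if 0 < B i k then
        reflRoot (mutateBasisOut (mutate k B) k β' k) (mutateBasisOut (mutate k B) k β' i)
      else mutateBasisOut (mutate k B) k β' i) = β' i
    rw [hγk, hγ i]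
    by_cases hi : 0 < B i k
    · rw [if_pos hi, if_pos hi, refl_invol hα0]
    · rw [if_neg hi, if_neg hi]
  refine ⟨?_, ?_, part3⟩
  · intro β' h
    exact ⟨mutateBasisOut (mutate k B) k β',
      mutateOut_isCompanion hΦ hsk hft k h, (part3 β' h).symm⟩
  · intro β h
    have hα0 : β k ≠ 0 := hΦ.2.1 _ (h.1 k)
    have hγ : ∀ i, mutateBasis B k β i
        = if 0 < B i k then reflRoot (β k) (β i) else β i := fun i => rfl
    have hγk : mutateBasis B k β k = β k := by rw [hγ k, if_neg (by omega)]
    funext i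
    show (if mutate k B i k < 0 then
        reflRoot (mutateBasis B k β k) (mutateBasis B k β i)
      else mutateBasis B k β i) = β i
    rw [mutate_col]
    simp only [neg_lt_zero]
    rw [hγk, hγ i]
    by_cases hi : 0 < B i k
    · rw [if_pos hi, if_pos hi, refl_invol hα0]
    · rw [if_neg hi, if_neg hi]

end ClusterReflection
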